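/- Let s, d, n ∈ ℕ, let G := S_d □ H_n with leaves u₁, …, u_d of S_d and root r, let (≺, φ) be an s-stack layout of G, and let p₁, …, p_n be a path in H_n. Suppose: (i) for every edge xy of H_n and all leaves v, w of S_d, φ((v,x)(v,y)) = φ((w,x)(w,y)); (ii) for all vertices p, q of H_n and all leaves v, w of S_d, (v,p) ≺ (v,q) if and only if (w,p) ≺ (w,q); and (iii) for each j ∈ {1,…,n}, (u₁,p_j) ≺ (u₂,p_j) ≺ ⋯ ≺ (u_d,p_j). Then the subgraph X := S_d □ P of G (where P is the path p₁,…,p_n) contains a set of at least min{⌊d/2^n⌋, ⌈n/2⌉} edges that pairwise cross with respect to ≺. -/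

import Mathlib

open SimpleGraph

/-- Two (unordered) pairs of vertices cross with respect to the strict order `lt`:
with `e = {v,w}`, `f = {x,y}`, `v ≺ w`, `x ≺ y`, they cross if
`v ≺ x ≺ w ≺ y` or `x ≺ v ≺ y ≺ w`. -/
def Cross {V : Type*} (lt : V → V → Prop) (e f : Sym2 V) : Prop :=
  ∃ v w x y : V, e = s(v, w) ∧ f = s(x, y) ∧
    ((lt v x ∧ lt x w ∧ lt w y) ∨ (lt x v ∧ lt v y ∧ lt y w))

/-- Two (unordered) pairs of vertices nest with respect to the strict order `lt`:
with `e = {v,w}`, `f = {x,y}`, `v ≺ w`, `x ≺ y`, they nest if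
`v ≺ x ≺ y ≺ w` or `x ≺ v ≺ w ≺ y`. -/
def Nest {V : Type*} (lt : V → V → Prop) (e f : Sym2 V) : Prop :=
  ∃ v w x y : V, e = s(v, w) ∧ f = s(x, y) ∧
    ((lt v x ∧ lt x y ∧ lt y w) ∨ (lt x v ∧ lt v w ∧ lt w y))

/-- `(lt, φ)` is a `k`-stack layout of `G`: `lt` is a linear (strict total) order on the
vertices and no two edges with the same colour cross. -/
def IsStackLayout {V : Type*} {k : ℕ} (G : SimpleGraph V)
    (lt : V → V → Prop) (φ : Sym2 V → Fin k) : Prop :=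
  IsStrictTotalOrder V lt ∧
    ∀ e ∈ G.edgeSet, ∀ f ∈ G.edgeSet, φ e = φ f → ¬ Cross lt e f

/-- `(lt, φ)` is a `k`-queue layout of `G`: `lt` is a linear (strict total) order on the
vertices and no two edges with the same colour nest. -/
def IsQueueLayout {V : Type*} {k : ℕ} (G : SimpleGraph V)
    (lt : V → V → Prop) (φ : Sym2 V → Fin k) : Prop :=
  IsStrictTotalOrder V lt ∧
    ∀ e ∈ G.edgeSet, ∀ f ∈ G.edgeSet, φ e = φ f → ¬ Nest lt e f

/-- The stack-number of `G`: the least `k` such that `G` has a `k`-stack layout. -/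
noncomputable def stackNumber {V : Type*} (G : SimpleGraph V) : ℕ :=
  sInf {k | ∃ (lt : V → V → Prop) (φ : Sym2 V → Fin k), IsStackLayout G lt φ}

/-- The queue-number of `G`: the least `k` such that `G` has a `k`-queue layout. -/
noncomputable def queueNumber {V : Type*} (G : SimpleGraph V) : ℕ :=
  sInf {k | ∃ (lt : V → V → Prop) (φ : Sym2 V → Fin k), IsQueueLayout G lt φ}

/-- A queue layout is strict if for every vertex `u` and neighbours `v, w` of `u` with
`u ≺ v ≺ w` or `v ≺ w ≺ u`, the edges `uv` and `uw` get different colours. -/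
def IsStrictQueueLayout {V : Type*} {k : ℕ} (G : SimpleGraph V)
    (lt : V → V → Prop) (φ : Sym2 V → Fin k) : Prop :=
  IsQueueLayout G lt φ ∧
    ∀ u v w : V, G.Adj u v → G.Adj u w →
      ((lt u v ∧ lt v w) ∨ (lt v w ∧ lt w u)) → φ s(u, v) ≠ φ s(u, w)

/-- The strict queue-number of `G`. -/
noncomputable def strictQueueNumber {V : Type*} (G : SimpleGraph V) : ℕ :=
  sInf {k | ∃ (lt : V → V → Prop) (φ : Sym2 V → Fin k), IsStrictQueueLayout G lt φ}

/-- A stack layout is dispersable if the colouring is a proper edge-colouring. -/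
def IsDispersableStackLayout {V : Type*} {k : ℕ} (G : SimpleGraph V)
    (lt : V → V → Prop) (φ : Sym2 V → Fin k) : Prop :=
  IsStackLayout G lt φ ∧
    ∀ u v w : V, G.Adj u v → G.Adj u w → v ≠ w → φ s(u, v) ≠ φ s(u, w)

/-- The dispersable stack-number of `G`. -/
noncomputable def dispersableStackNumber {V : Type*} (G : SimpleGraph V) : ℕ :=
  sInf {k | ∃ (lt : V → V → Prop) (φ : Sym2 V → Fin k), IsDispersableStackLayout G lt φ}

/-- The star `S_b` with root `none` and leaves `some i`, `i : Fin b`. -/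
def starGraph (b : ℕ) : SimpleGraph (Option (Fin b)) :=
  SimpleGraph.fromRel (fun v w => v = none ∧ w ≠ none)

/-- The triangulated grid `H_n` on vertex set `Fin n × Fin n` (0-indexed), with horizontal
edges `(x,y)(x+1,y)`, vertical edges `(x,y)(x,y+1)` and diagonal edges `(x,y)(x+1,y+1)`. -/
def triGrid (n : ℕ) : SimpleGraph (Fin n × Fin n) :=
  SimpleGraph.fromRel (fun p q =>
    ((p.1 : ℕ) + 1 = (q.1 : ℕ) ∧ p.2 = q.2) ∨
    (p.1 = q.1 ∧ (p.2 : ℕ) + 1 = (q.2 : ℕ)) ∨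
    ((p.1 : ℕ) + 1 = (q.1 : ℕ) ∧ (p.2 : ℕ) + 1 = (q.2 : ℕ)))

private lemma cross_swap {V : Type*} {lt : V → V → Prop} {e f : Sym2 V}
    (h : Cross lt e f) : Cross lt f e := by
  obtain ⟨v, w, x, y, he, hf, hc | hc⟩ := h
  · exact ⟨x, y, v, w, hf, he, Or.inr ⟨hc.1, hc.2.1, hc.2.2⟩⟩
  · exact ⟨x, y, v, w, hf, he, Or.inl ⟨hc.1, hc.2.1, hc.2.2⟩⟩

private lemma cross_flip {V : Type*} {lt : V → V → Prop} {e f : Sym2 V}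
    (h : Cross (fun a b => lt b a) e f) : Cross lt e f := by
  obtain ⟨v, w, x, y, he, hf, hc | hc⟩ := h
  · exact ⟨w, v, y, x, by rw [he]; exact Sym2.eq_swap, by rw [hf]; exact Sym2.eq_swap,
      Or.inr ⟨hc.2.2, hc.2.1, hc.1⟩⟩
  · exact ⟨w, v, y, x, by rw [he]; exact Sym2.eq_swap, by rw [hf]; exact Sym2.eq_swap,
      Or.inl ⟨hc.2.2, hc.2.1, hc.1⟩⟩

/-- Abstract core construction: given `n` levels of `d` points `A j i`, ordered within
each level, with the one-step "interleaving" property across consecutive levels, and a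
set `T` of levels whose root `r j` lies above the threshold point `A j τ` with
`τ = sp * K`, the star edges from the roots to suitably rank-spaced anchor points
pairwise cross. -/
private lemma core_construction {V : Type*} {n d K sp : ℕ} (lt : V → V → Prop)
    (htrans : ∀ {a b c : V}, lt a b → lt b c → lt a c)
    (hirr : ∀ a : V, ¬ lt a a)
    (htri : ∀ a b : V, a ≠ b → lt a b ∨ lt b a)
    (A : Fin n → Fin d → V) (r : Fin n → V)
    (hstep : ∀ (j k : Fin n), (j : ℕ) + 1 = (k : ℕ) → ∀ (i i' : Fin d),
      (i : ℕ) < (i' : ℕ) → lt (A k i) (A j i') ∧ lt (A j i) (A k i'))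
    (hns : n ≤ sp + 1)
    (hrinj : ∀ j k : Fin n, r j = r k → j = k)
    (T : Finset (Fin n)) (hT : T.card = K)
    (τ : Fin d) (hτv : (τ : ℕ) = sp * K)
    (hτ : ∀ j ∈ T, lt (A j τ) (r j)) :
    ∃ g : Fin n → Fin d, ∀ j ∈ T, ∀ k ∈ T, j ≠ k →
      Cross lt s(r j, A j (g j)) s(r k, A k (g k)) := by
  classical
  have hdrift : ∀ t : ℕ, 1 ≤ t → ∀ (j k : Fin n),
      ((j : ℕ) + t = (k : ℕ) ∨ (k : ℕ) + t = (j : ℕ)) →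
      ∀ (i i' : Fin d), (i : ℕ) + t ≤ (i' : ℕ) → lt (A j i) (A k i') := by
    intro t
    induction t with
    | zero => omega
    | succ t ih =>
      intro _ j k hjk i i' hii
      by_cases ht : t = 0
      · subst ht
        rcases hjk with h | h
        · exact (hstep j k (by omega) i i' (by omega)).2
        · exact (hstep k j (by omega) i i' (by omega)).1
      · have ht1 : 1 ≤ t := by omega
        have hi1 : (i : ℕ) + 1 < d := by have := i'.isLt; omega
        rcases hjk with h | h
        · have hm : (j : ℕ) + 1 < n := by have := k.isLt; omega
          have l1 : lt (A j i) (A ⟨(j : ℕ) + 1, hm⟩ ⟨(i : ℕ) + 1, hi1⟩) :=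
            (hstep j ⟨(j : ℕ) + 1, hm⟩ (by simp) i ⟨(i : ℕ) + 1, hi1⟩ (by simp)).2
          have l2 : lt (A ⟨(j : ℕ) + 1, hm⟩ ⟨(i : ℕ) + 1, hi1⟩) (A k i') := by
            refine ih ht1 _ k (Or.inl ?_) _ i' ?_ <;> simp <;> omega
          exact htrans l1 l2
        · have hm : (k : ℕ) + t < n := by have := j.isLt; omega
          have l1 : lt (A j i) (A ⟨(k : ℕ) + t, hm⟩ ⟨(i : ℕ) + 1, hi1⟩) :=
            (hstep ⟨(k : ℕ) + t, hm⟩ j (by simp; omega) i ⟨(i : ℕ) + 1, hi1⟩ (by simp)).1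
          have l2 : lt (A ⟨(k : ℕ) + t, hm⟩ ⟨(i : ℕ) + 1, hi1⟩) (A k i') := by
            refine ih ht1 _ k (Or.inr ?_) _ i' ?_ <;> simp <;> omega
          exact htrans l1 l2
  have hfar : ∀ (j k : Fin n), j ≠ k → ∀ (i i' : Fin d), (i : ℕ) + sp ≤ (i' : ℕ) →
      lt (A j i) (A k i') := by
    intro j k hjk i i' h
    have hjv : (j : ℕ) ≠ (k : ℕ) := fun hc => hjk (Fin.ext hc)
    rcases Nat.lt_or_ge (j : ℕ) (k : ℕ) with hlt | hge
    · exact hdrift ((k : ℕ) - (j : ℕ)) (by omega) j k (Or.inl (by omega)) i i'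
        (by have := k.isLt; omega)
    · exact hdrift ((j : ℕ) - (k : ℕ)) (by omega) j k (Or.inr (by omega)) i i'
        (by have := j.isLt; omega)
  set rank : Fin n → ℕ := fun j => (T.filter fun x => lt (r x) (r j)).card with hrankdef
  have hrankle : ∀ j, rank j ≤ K := fun j => hT ▸ Finset.card_le_card (Finset.filter_subset _ _)
  have hranklt : ∀ j ∈ T, rank j < K := by
    intro j hj
    rw [← hT]
    apply Finset.card_lt_card
    refine ⟨Finset.filter_subset _ _, fun hsub => ?_⟩
    exact hirr (r j) (Finset.mem_filter.1 (hsub hj)).2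
  have hglt : ∀ j, sp * rank j < d := by
    intro j
    have h5 : sp * rank j ≤ sp * K := Nat.mul_le_mul_left _ (hrankle j)
    have := τ.isLt
    omega
  set g : Fin n → Fin d := fun j => ⟨sp * rank j, hglt j⟩ with hgdef
  have hmono : ∀ j ∈ T, ∀ k ∈ T, lt (r j) (r k) → rank j < rank k := by
    intro j hj k hk h
    apply Finset.card_lt_card
    constructor
    · intro x hx
      rw [Finset.mem_filter] at hx ⊢
      exact ⟨hx.1, htrans hx.2 h⟩
    · intro hsub
      have hjmem : j ∈ T.filter fun x => lt (r x) (r k) := Finset.mem_filter.2 ⟨hj, h⟩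
      exact hirr (r j) (Finset.mem_filter.1 (hsub hjmem)).2
  refine ⟨g, ?_⟩
  have key : ∀ j ∈ T, ∀ k ∈ T, lt (r j) (r k) →
      Cross lt s(r j, A j (g j)) s(r k, A k (g k)) := by
    intro j hj k hk h
    have hjk : j ≠ k := by
      intro he; rw [he] at h; exact hirr _ h
    have hr1 : rank j < rank k := hmono j hj k hk h
    have c1 : lt (A j (g j)) (A k (g k)) := by
      apply hfar j k hjk
      have h6 : sp * (rank j + 1) ≤ sp * rank k := Nat.mul_le_mul_left _ hr1
      rw [Nat.mul_succ] at h6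
      exact h6
    have c2 : lt (A k (g k)) (r j) := by
      refine htrans (hfar k j (fun hc => hjk hc.symm) (g k) τ ?_) (hτ j hj)
      have h6 : sp * (rank k + 1) ≤ sp * K := Nat.mul_le_mul_left _ (hranklt k hk)
      rw [Nat.mul_succ] at h6
      rw [hτv]
      exact h6
    exact ⟨A j (g j), r j, A k (g k), r k, Sym2.eq_swap, Sym2.eq_swap, Or.inl ⟨c1, c2, h⟩⟩
  intro j hj k hk hjk
  rcases htri (r j) (r k) (fun hc => hjk (hrinj j k hc)) with h | h
  · exact key j hj k hk h
  · exact cross_swap (key k hk j hj h)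

/-- under the uniformity hypotheses (i)–(iii), the subgraph
`X = S_d □ P` of `S_d □ H_n` contains at least `min{⌊d/2^n⌋, ⌈n/2⌉}` pairwise crossing
edges with respect to the vertex order of the given `s`-stack layout. -/
theorem stmt9 (s d n : ℕ)
    (lt : Option (Fin d) × (Fin n × Fin n) → Option (Fin d) × (Fin n × Fin n) → Prop)
    (φ : Sym2 (Option (Fin d) × (Fin n × Fin n)) → Fin s)
    (hlayout : IsStackLayout (_root_.starGraph d □ triGrid n) lt φ)
    (u : Fin d → Fin d) (hu : Function.Injective u)
    (p : Fin n → Fin n × Fin n) (hp : Function.Injective p)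
    (hpath : ∀ i j : Fin n, (i : ℕ) + 1 = (j : ℕ) → (triGrid n).Adj (p i) (p j))
    (h1 : ∀ x y : Fin n × Fin n, (triGrid n).Adj x y → ∀ v w : Fin d,
      φ s(((some v : Option (Fin d)), x), (some v, y)) = φ s((some w, x), (some w, y)))
    (h2 : ∀ x y : Fin n × Fin n, ∀ v w : Fin d,
      lt ((some v : Option (Fin d)), x) (some v, y) ↔ lt (some w, x) (some w, y))
    (h3 : ∀ j : Fin n, ∀ i i' : Fin d, i < i' →
      lt ((some (u i) : Option (Fin d)), p j) (some (u i'), p j)) :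
    ∃ E : Finset (Sym2 (Option (Fin d) × (Fin n × Fin n))),
      (∀ e ∈ E, e ∈ (_root_.starGraph d □ SimpleGraph.fromRel
        (fun q q' => ∃ i j : Fin n, (i : ℕ) + 1 = (j : ℕ) ∧ q = p i ∧ q' = p j)).edgeSet) ∧
      min (d / 2 ^ n) ((n + 1) / 2) ≤ E.card ∧
      (∀ e ∈ E, ∀ f ∈ E, e ≠ f → Cross lt e f) := by
  classical
  haveI hsto : IsStrictTotalOrder _ lt := hlayout.1
  have htri : ∀ a b : Option (Fin d) × (Fin n × Fin n), a ≠ b → lt a b ∨ lt b a := by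
    intro a b hab
    rcases trichotomous_of lt a b with h | h | h
    · exact Or.inl h
    · exact absurd h hab
    · exact Or.inr h
  set Kv := min (d / 2 ^ n) ((n + 1) / 2) with hKv
  by_cases hK0 : Kv = 0
  · exact ⟨∅, by simp, by simp [hK0], by simp⟩
  have hK1 : 1 ≤ Kv := Nat.pos_of_ne_zero hK0
  have hKn : Kv ≤ (n + 1) / 2 := min_le_right _ _
  have hKd : Kv ≤ d / 2 ^ n := min_le_left _ _
  have hn1 : 1 ≤ n := by omega
  have hpow : Kv * 2 ^ n ≤ d :=
    (Nat.le_div_iff_mul_le (pow_pos (by norm_num : (0:ℕ) < 2) n)).1 hKd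
  set sp := n - 1 with hsp
  have hp2 : n - 1 < 2 ^ (n - 1) := Nat.lt_two_pow_self
  have hpow2 : 2 ^ n = 2 * 2 ^ (n - 1) := by
    conv_lhs => rw [show n = (n - 1) + 1 by omega]
    rw [pow_succ]
    ring
  have hspK : 2 * (sp * Kv) + 1 ≤ d := by
    have h5 : (sp + 1) * Kv ≤ 2 ^ (n - 1) * Kv := Nat.mul_le_mul_right _ (by omega)
    have hKd2 : Kv * (2 * 2 ^ (n - 1)) ≤ d := by rw [← hpow2]; exact hpow
    have e1 : (sp + 1) * Kv = sp * Kv + Kv := by ring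
    have e2 : Kv * (2 * 2 ^ (n - 1)) = 2 * (2 ^ (n - 1) * Kv) := by ring
    nlinarith
  have hτd : sp * Kv < d := by omega
  set τ : Fin d := ⟨sp * Kv, hτd⟩ with hτdef
  set rt : Fin n → Option (Fin d) × (Fin n × Fin n) := fun j => (none, p j) with hrt
  set Ap : Fin n → Fin d → Option (Fin d) × (Fin n × Fin n) :=
    fun j i => (some (u i), p j) with hAp
  have hAmem : ∀ (j : Fin n) (i i' : Fin d), (i : ℕ) < (i' : ℕ) → lt (Ap j i) (Ap j i') :=
    fun j i i' h => h3 j i i' (Fin.lt_def.2 h)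
  have hstepM : ∀ (j k : Fin n), (j : ℕ) + 1 = (k : ℕ) → ∀ (i i' : Fin d),
      (i : ℕ) < (i' : ℕ) → lt (Ap k i) (Ap j i') ∧ lt (Ap j i) (Ap k i') := by
    intro j k hjk i i' hii
    have hadj : (triGrid n).Adj (p j) (p k) := hpath j k hjk
    have hmem : ∀ v : Fin d,
        s(((some v : Option (Fin d)), p j), (some v, p k)) ∈
          (_root_.starGraph d □ triGrid n).edgeSet := by
      intro v
      rw [SimpleGraph.mem_edgeSet, SimpleGraph.boxProd_adj]
      exact Or.inr ⟨hadj, rfl⟩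
    have hcol := h1 (p j) (p k) hadj (u i) (u i')
    have hnc := hlayout.2 _ (hmem (u i)) _ (hmem (u i')) hcol
    have hFi : i < i' := Fin.lt_def.2 hii
    have o1 : lt (Ap j i) (Ap j i') := h3 j i i' hFi
    have o2 : lt (Ap k i) (Ap k i') := h3 k i i' hFi
    have hune : ∀ (x y : Fin n), (((some (u i) : Option (Fin d)), p x) :
        Option (Fin d) × (Fin n × Fin n)) ≠ (some (u i'), p y) := by
      intro x y hE
      have h7 : u i = u i' := by
        have := congrArg Prod.fst hE
        simpa using this
      have h8 : (i : ℕ) = (i' : ℕ) := congrArg Fin.val (hu h7)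
      omega
    constructor
    · by_contra hcon
      have hlt2 : lt (Ap j i') (Ap k i) := by
        rcases htri (Ap k i) (Ap j i') (hune k j) with h | h
        · exact absurd h hcon
        · exact h
      exact hnc ⟨Ap j i, Ap k i, Ap j i', Ap k i', rfl, rfl, Or.inl ⟨o1, hlt2, o2⟩⟩
    · by_contra hcon
      have hlt2 : lt (Ap k i') (Ap j i) := by
        rcases htri (Ap j i) (Ap k i') (hune j k) with h | h
        · exact absurd h hcon
        · exact h
      exact hnc ⟨Ap k i, Ap j i, Ap k i', Ap j i', Sym2.eq_swap, Sym2.eq_swap,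
        Or.inl ⟨o2, hlt2, o1⟩⟩
  have hrAne : ∀ (j k : Fin n) (i : Fin d), rt j ≠ Ap k i := by
    intro j k i hE
    simpa [hrt, hAp] using congrArg Prod.fst hE
  have hrinjM : ∀ j k : Fin n, rt j = rt k → j = k := by
    intro j k hE
    exact hp (by simpa [hrt] using congrArg Prod.snd hE)
  have hsplit : Kv ≤ (Finset.univ.filter fun j : Fin n => lt (Ap j τ) (rt j)).card ∨
      Kv ≤ (Finset.univ.filter fun j : Fin n => ¬ lt (Ap j τ) (rt j)).card := by
    have hc := Finset.card_filter_add_card_filter_not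
      (s := (Finset.univ : Finset (Fin n))) (p := fun j : Fin n => lt (Ap j τ) (rt j))
    rw [Finset.card_univ, Fintype.card_fin] at hc
    omega
  have main : ∃ T : Finset (Fin n), T.card = Kv ∧ ∃ g : Fin n → Fin d,
      ∀ j ∈ T, ∀ k ∈ T, j ≠ k →
        Cross lt s(rt j, Ap j (g j)) s(rt k, Ap k (g k)) := by
    rcases hsplit with hside | hside
    · obtain ⟨T, hTs, hTc⟩ := Finset.exists_subset_card_eq hside
      refine ⟨T, hTc, ?_⟩
      exact core_construction lt (fun h1 h2 => IsTrans.trans _ _ _ h1 h2)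
        (fun a => irrefl_of lt a) htri Ap rt hstepM (by omega) hrinjM T hTc τ rfl
        (fun j hj => (Finset.mem_filter.1 (hTs hj)).2)
    · obtain ⟨T, hTs, hTc⟩ := Finset.exists_subset_card_eq hside
      refine ⟨T, hTc, ?_⟩
      have hd1 : 1 ≤ d := by omega
      set rev : Fin d → Fin d := fun i => ⟨d - 1 - (i : ℕ), by omega⟩ with hrev
      have hrevlt : ∀ i i' : Fin d, (i : ℕ) < (i' : ℕ) → ((rev i' : Fin d) : ℕ) < (rev i : ℕ) := by
        intro i i' h
        have := i'.isLt
        simp only [hrev]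
        omega
      have hcore := core_construction (fun a b => lt b a)
        (fun h1 h2 => IsTrans.trans _ _ _ h2 h1) (fun a h => irrefl_of lt a h)
        (fun a b hab => (htri a b hab).symm)
        (fun j i => Ap j (rev i)) rt
        (fun j k hjk i i' h => ⟨(hstepM j k hjk (rev i') (rev i) (hrevlt i i' h)).2,
          (hstepM j k hjk (rev i') (rev i) (hrevlt i i' h)).1⟩)
        (by omega) hrinjM T hTc τ rfl ?_
      · obtain ⟨g, hg⟩ := hcore
        exact ⟨fun j => rev (g j), fun j hj k hk hjk => cross_flip (hg j hj k hk hjk)⟩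
      · intro j hj
        have hnotlt : ¬ lt (Ap j τ) (rt j) := (Finset.mem_filter.1 (hTs hj)).2
        have hlow : lt (rt j) (Ap j τ) := by
          rcases htri (rt j) (Ap j τ) (hrAne j j τ) with h | h
          · exact h
          · exact absurd h hnotlt
        show lt (rt j) (Ap j (rev τ))
        rcases Nat.lt_or_ge (τ : ℕ) ((rev τ : Fin d) : ℕ) with hc | hc
        · exact IsTrans.trans _ _ _ hlow (hAmem j τ (rev τ) hc)
        · have hEq : rev τ = τ := by
            apply Fin.ext
            simp only [hrev, hτdef] at hc ⊢
            omega
          rw [hEq]; exact hlow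
  obtain ⟨T, hTc, g, hg⟩ := main
  have hinj : Set.InjOn (fun j => s(rt j, Ap j (g j))) ↑T := by
    intro a _ b _ hE
    simp only at hE
    rw [Sym2.eq_iff] at hE
    rcases hE with ⟨hh1, _⟩ | ⟨hh1, _⟩
    · exact hrinjM a b hh1
    · exact absurd hh1 (hrAne a b (g b))
  refine ⟨T.image (fun j => s(rt j, Ap j (g j))), ?_, ?_, ?_⟩
  · intro e he
    obtain ⟨j, hj, rfl⟩ := Finset.mem_image.1 he
    rw [SimpleGraph.mem_edgeSet, SimpleGraph.boxProd_adj]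
    left
    constructor
    · show (_root_.starGraph d).Adj none (some (u (g j)))
      rw [_root_.starGraph, SimpleGraph.fromRel_adj]
      exact ⟨by simp, Or.inl ⟨rfl, by simp⟩⟩
    · rfl
  · rw [Finset.card_image_of_injOn hinj, hTc]
  · intro e he f hf hef
    obtain ⟨j, hj, rfl⟩ := Finset.mem_image.1 he
    obtain ⟨k, hk, rfl⟩ := Finset.mem_image.1 hf
    have hjk : j ≠ k := fun h => hef (by rw [h])
    exact hg j hj k hk hjk
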